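/- Let M ≥ 2 be an integer, D > 0, h > 0, ε > 0, and let A be the (M−1)×(M−1) real matrix (D/h²)·tridiag(1, −2, 1) (i.e. A has −2D/h² on the diagonal and D/h² on the sub- and super-diagonals). Let ξ_1, …, ξ_{M−1} be reals with υ_LB ≤ ξ_i ≤ υ_UB for all i, and let B := ε·diag(1 − 2ξ_1, …, 1 − 2ξ_{M−1}). Then every element w of the set W_1(−A, B) := {⟨v, B v⟩ : v ∈ ℂ^{M−1}, ⟨v, −A v⟩ = 1} is a real number, and there exists ℓ with (2D/h²)(1 + cos((M−1)π/M)) ≤ ℓ ≤ (2D/h²)(1 + cos(π/M)) such that (ε/ℓ)(1 − 2υ_UB) ≤ w ≤ (ε/ℓ)(1 − 2υ_LB). -/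

import Mathlib

open Matrix Finset Complex

/-- The finite-difference matrix `(D/h²)·tridiag(1, −2, 1)` of size `(M−1)×(M−1)`. -/
noncomputable def fdMatrix (M : ℕ) (D h : ℝ) : Matrix (Fin (M - 1)) (Fin (M - 1)) ℝ :=
  Matrix.of fun i j =>
    (D / h ^ 2) *
      (if (i : ℕ) = (j : ℕ) then -2
       else if (i : ℕ) + 1 = (j : ℕ) ∨ (j : ℕ) + 1 = (i : ℕ) then 1 else 0)


lemma edge_id (a b : ℝ) (z w : ℂ) :
    Complex.normSq ((a:ℂ)*z - (b:ℂ)*w) =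
      b * a * Complex.normSq (z - w) + (a - b) * (a * Complex.normSq z - b * Complex.normSq w) := by
  simp [Complex.normSq_apply, Complex.sub_re, Complex.sub_im, Complex.mul_re, Complex.mul_im]
  ring

lemma abel_id (Mn : ℕ) (u g : ℕ → ℝ) (hg0 : g 0 = 0) (hgM : g Mn = 0) :
    ∑ k ∈ range Mn, (u (k+1) - u k) * (g (k+1) - g k)
      = ∑ k ∈ range Mn, (2*u (k+1) - u (k+2) - u k) * g (k+1) := by
  have h := Finset.sum_range_sub (fun k => u (k+1) * g k - u k * g k) Mn
  have h2 : ∀ k, (u (k+1) - u k) * (g (k+1) - g k) - (2*u (k+1) - u (k+2) - u k) * g (k+1)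
      = (u (k+1+1) * g (k+1) - u (k+1) * g (k+1)) - (u (k+1) * g k - u k * g k) := by
    intro k; ring
  have h3 : ∑ k ∈ range Mn, ((u (k+1) - u k) * (g (k+1) - g k)
      - (2*u (k+1) - u (k+2) - u k) * g (k+1)) = 0 := by
    rw [Finset.sum_congr rfl fun k _ => h2 k, h, hg0, hgM]; ring
  have := Finset.sum_sub_distrib (s := range Mn)
    (f := fun k => (u (k+1) - u k) * (g (k+1) - g k))
    (g := fun k => (2*u (k+1) - u (k+2) - u k) * g (k+1))
  linarith [h3, this]

lemma sbp (Mn : ℕ) (a : ℕ → ℂ) (ha0 : a 0 = 0) (haM : a Mn = 0) :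
    ∑ k ∈ range Mn, (starRingEnd ℂ) (a (k+1)) * (2*a (k+1) - a (k+2) - a k)
      = ∑ k ∈ range Mn, ((Complex.normSq (a (k+1) - a k) : ℝ) : ℂ) := by
  have h2 : ∀ k, ((Complex.normSq (a (k+1) - a k) : ℝ) : ℂ)
      - (starRingEnd ℂ) (a (k+1)) * (2*a (k+1) - a (k+2) - a k)
      = (a (k+1+1) * (starRingEnd ℂ) (a (k+1)) - a (k+1) * (starRingEnd ℂ) (a (k+1)))
        - (a (k+1) * (starRingEnd ℂ) (a k) - a k * (starRingEnd ℂ) (a k)) := by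
    intro k
    rw [← Complex.mul_conj (a (k+1) - a k)]
    simp [map_sub, map_add]
    ring
  have h := Finset.sum_range_sub (fun k => a (k+1) * (starRingEnd ℂ) (a k) - a k * (starRingEnd ℂ) (a k)) Mn
  have h3 : ∑ k ∈ range Mn, (((Complex.normSq (a (k+1) - a k) : ℝ) : ℂ)
      - (starRingEnd ℂ) (a (k+1)) * (2*a (k+1) - a (k+2) - a k)) = 0 := by
    rw [Finset.sum_congr rfl fun k _ => h2 k, h, ha0, haM]; simp
  rw [Finset.sum_sub_distrib] at h3
  linear_combination -h3

lemma wirtinger_low (Mn : ℕ) (hMn : 1 ≤ Mn) (V : ℕ → ℂ) (hV0 : V 0 = 0) (hVM : V Mn = 0) :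
    2*(1 - Real.cos (Real.pi / Mn)) * ∑ k ∈ range (Mn+1), Complex.normSq (V k)
      ≤ ∑ k ∈ range Mn, Complex.normSq (V (k+1) - V k) := by
  set θ := Real.pi / Mn with hθ
  have hMpos : (0:ℝ) < Mn := by exact_mod_cast hMn
  have hθpos : 0 < θ := div_pos Real.pi_pos hMpos
  set u : ℕ → ℝ := fun k => Real.sin (k * θ) with hu
  have hu0 : u 0 = 0 := by simp [hu]
  have hMθ : (Mn:ℝ) * θ = Real.pi := by
    rw [hθ]; field_simp
  have huM : u Mn = 0 := by
    simp only [hu, hMθ]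
    exact Real.sin_pi
  have hunn : ∀ k, k ≤ Mn → 0 ≤ u k := by
    intro k hk
    apply Real.sin_nonneg_of_nonneg_of_le_pi
    · positivity
    · calc (k:ℝ) * θ ≤ Mn * θ := by
            apply mul_le_mul_of_nonneg_right _ hθpos.le; exact_mod_cast hk
        _ = Real.pi := hMθ
  have hupos : ∀ k, 0 < k → k < Mn → 0 < u k := by
    intro k hk1 hk2
    apply Real.sin_pos_of_pos_of_lt_pi
    · have : (0:ℝ) < k := by exact_mod_cast hk1
      positivity
    · have : (k:ℝ) < Mn := by exact_mod_cast hk2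
      calc (k:ℝ) * θ < Mn * θ := by exact mul_lt_mul_of_pos_right this hθpos
        _ = Real.pi := hMθ
  set W : ℕ → ℂ := fun k => V k / ((u k : ℝ) : ℂ) with hW
  have hVW : ∀ k, k ≤ Mn → V k = ((u k : ℝ) : ℂ) * W k := by
    intro k hk
    rcases Nat.eq_zero_or_pos k with rfl | hk1
    · rw [hV0]; rw [show W 0 = 0 by simp [hW, hV0]]; ring
    rcases eq_or_lt_of_le hk with rfl | hk2
    · rw [hVM]; rw [show W k = 0 by simp [hW, hVM]]; ring
    · have hne : u k ≠ 0 := ne_of_gt (hupos k hk1 hk2)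
      have hC : ((u k : ℝ) : ℂ) ≠ 0 := by exact_mod_cast hne
      rw [hW]
      rw [mul_comm, div_mul_cancel₀ _ hC]
  set g : ℕ → ℝ := fun k => u k * Complex.normSq (W k) with hg
  have hg0 : g 0 = 0 := by simp [hg, hu0]
  have hgM : g Mn = 0 := by simp [hg, huM]
  -- trig recurrence
  have htrig : ∀ k : ℕ, 2 * u (k+1) - u (k+2) - u k = 2*(1 - Real.cos θ) * u (k+1) := by
    intro k
    have e1 : ((k:ℝ)+2) * θ = ((k:ℝ)+1) * θ + θ := by ring
    have e2 : (k:ℝ) * θ = ((k:ℝ)+1) * θ - θ := by ring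
    simp only [hu]
    push_cast
    rw [e1, e2, Real.sin_add, Real.sin_sub]
    ring
  -- main identity
  have hedge : ∀ k ∈ range Mn, Complex.normSq (V (k+1) - V k)
      = u k * u (k+1) * Complex.normSq (W (k+1) - W k)
        + (u (k+1) - u k) * (g (k+1) - g k) := by
    intro k hk
    rw [Finset.mem_range] at hk
    rw [hVW (k+1) hk, hVW k (le_of_lt hk), edge_id]
  have hsum : ∑ k ∈ range Mn, Complex.normSq (V (k+1) - V k)
      = (∑ k ∈ range Mn, u k * u (k+1) * Complex.normSq (W (k+1) - W k))
        + ∑ k ∈ range Mn, (u (k+1) - u k) * (g (k+1) - g k) := by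
    rw [← Finset.sum_add_distrib]
    exact Finset.sum_congr rfl hedge
  have habel : ∑ k ∈ range Mn, (u (k+1) - u k) * (g (k+1) - g k)
      = 2*(1 - Real.cos θ) * ∑ k ∈ range (Mn+1), Complex.normSq (V k) := by
    rw [abel_id Mn u g hg0 hgM]
    have : ∀ k ∈ range Mn, (2*u (k+1) - u (k+2) - u k) * g (k+1)
        = 2*(1 - Real.cos θ) * Complex.normSq (V (k+1)) := by
      intro k hk
      rw [Finset.mem_range] at hk
      rw [htrig k, hVW (k+1) hk]
      simp only [hg]
      rw [Complex.normSq_mul, Complex.normSq_ofReal]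
      ring
    rw [Finset.sum_congr rfl this, ← Finset.mul_sum]
    congr 1
    rw [Finset.sum_range_succ' (fun k => Complex.normSq (V k)) Mn]
    simp [hV0]
  have hnn : 0 ≤ ∑ k ∈ range Mn, u k * u (k+1) * Complex.normSq (W (k+1) - W k) := by
    apply Finset.sum_nonneg
    intro k hk
    rw [Finset.mem_range] at hk
    have h1 := hunn k (le_of_lt hk)
    have h2 := hunn (k+1) hk
    exact mul_nonneg (mul_nonneg h1 h2) (Complex.normSq_nonneg _)
  rw [hsum, habel]
  linarith

lemma wirtinger_up (Mn : ℕ) (hMn : 1 ≤ Mn) (V : ℕ → ℂ) (hV0 : V 0 = 0) (hVM : V Mn = 0) :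
    ∑ k ∈ range Mn, Complex.normSq (V (k+1) - V k)
      ≤ 2*(1 + Real.cos (Real.pi / Mn)) * ∑ k ∈ range (Mn+1), Complex.normSq (V k) := by
  set V' : ℕ → ℂ := fun k => (-1:ℂ)^k * V k with hV'
  have h0 : V' 0 = 0 := by simp [hV', hV0]
  have hMe : V' Mn = 0 := by simp [hV', hVM]
  have hlow := wirtinger_low Mn hMn V' h0 hMe
  have hns : ∀ k, Complex.normSq (V' k) = Complex.normSq (V k) := by
    intro k
    simp [hV', Complex.normSq_mul, map_pow]
  have hdiff : ∀ k, Complex.normSq (V' (k+1) - V' k) = Complex.normSq (V (k+1) + V k) := by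
    intro k
    have : V' (k+1) - V' k = (-1:ℂ)^(k+1) * (V (k+1) + V k) := by
      simp only [hV']
      ring
    rw [this, Complex.normSq_mul, map_pow]
    simp
  have hpar : ∀ k, Complex.normSq (V (k+1) - V k) + Complex.normSq (V (k+1) + V k)
      = 2 * Complex.normSq (V (k+1)) + 2 * Complex.normSq (V k) := by
    intro k
    simp [Complex.normSq_apply, Complex.sub_re, Complex.sub_im, Complex.add_re, Complex.add_im]
    ring
  have hS1 : ∑ k ∈ range Mn, Complex.normSq (V (k+1))
      = ∑ k ∈ range (Mn+1), Complex.normSq (V k) := by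
    rw [Finset.sum_range_succ' (fun k => Complex.normSq (V k)) Mn]
    simp [hV0]
  have hS2 : ∑ k ∈ range Mn, Complex.normSq (V k)
      = ∑ k ∈ range (Mn+1), Complex.normSq (V k) := by
    rw [Finset.sum_range_succ (fun k => Complex.normSq (V k)) Mn]
    simp [hVM]
  have hsum4 : ∑ k ∈ range Mn, Complex.normSq (V (k+1) - V k)
      + ∑ k ∈ range Mn, Complex.normSq (V (k+1) + V k)
      = 4 * ∑ k ∈ range (Mn+1), Complex.normSq (V k) := by
    rw [← Finset.sum_add_distrib]
    rw [Finset.sum_congr rfl fun k _ => hpar k]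
    rw [Finset.sum_add_distrib, ← Finset.mul_sum, ← Finset.mul_sum, hS1, hS2]
    ring
  rw [Finset.sum_congr rfl fun k (_ : k ∈ range (Mn+1)) => hns k] at hlow
  rw [Finset.sum_congr rfl fun k (_ : k ∈ range Mn) => hdiff k] at hlow
  linarith

lemma fd_entry (M : ℕ) (D h : ℝ) (i j : Fin (M-1)) :
    ((-fdMatrix M D h).map Complex.ofReal) i j
      = ((D/h^2 : ℝ) : ℂ) * (2 * (if (i:ℕ) = (j:ℕ) then 1 else 0)
          - (if (i:ℕ) + 1 = (j:ℕ) then 1 else 0) - (if (j:ℕ) + 1 = (i:ℕ) then 1 else 0)) := by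
  simp only [Matrix.map_apply, Matrix.neg_apply, fdMatrix, Matrix.of_apply]
  split_ifs <;> push_cast <;> try ring
  all_goals (exfalso; omega)

lemma ind_sum (n t : ℕ) (f : ℕ → ℂ) :
    ∑ k ∈ range n, (if t = k then (1:ℂ) else 0) * f k = if t < n then f t else 0 := by
  simp only [ite_mul, one_mul, zero_mul]
  rw [Finset.sum_ite_eq (range n) t f]
  simp

lemma ind_sum' (n t : ℕ) (f : ℕ → ℂ) :
    ∑ k ∈ range n, (if k + 1 = t then (1:ℂ) else 0) * f k
      = if 1 ≤ t ∧ t - 1 < n then f (t-1) else 0 := by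
  rcases t with _ | m
  · simp
  · have : ∀ k, (if k + 1 = m + 1 then (1:ℂ) else 0) = (if k = m then 1 else 0) := by
      intro k; simp [Nat.succ_inj]
    rw [Finset.sum_congr rfl fun k _ => by rw [this k]]
    simp only [ite_mul, one_mul, zero_mul]
    rw [Finset.sum_ite_eq' (range n) m f]
    simp

/-- With `A = (D/h²)·tridiag(1,−2,1)`, `B = ε·diag(1−2ξ_i)`, `υ_LB ≤ ξ_i ≤ υ_UB`,
every element `w` of `W₁(−A, B) = {⟨v, Bv⟩ : ⟨v, −Av⟩ = 1}` is real and there exists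
`ℓ ∈ [(2D/h²)(1 + cos((M−1)π/M)), (2D/h²)(1 + cos(π/M))]` with
`(ε/ℓ)(1 − 2υ_UB) ≤ w ≤ (ε/ℓ)(1 − 2υ_LB)`. -/
theorem fov_fisher_kolmogorov_bounds (M : ℕ) (hM : 2 ≤ M)
    (D h ε : ℝ) (hD : 0 < D) (hh : 0 < h) (hε : 0 < ε)
    (ξ : Fin (M - 1) → ℝ) (υLB υUB : ℝ)
    (hξ : ∀ i, υLB ≤ ξ i ∧ ξ i ≤ υUB)
    (v : Fin (M - 1) → ℂ)
    (hv : star v ⬝ᵥ (((-fdMatrix M D h).map Complex.ofReal).mulVec v) = 1) :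
    ∃ w : ℝ,
      star v ⬝ᵥ
          (((Matrix.diagonal (fun i => ε * (1 - 2 * ξ i))).map Complex.ofReal).mulVec v) =
        (w : ℂ) ∧
      ∃ ℓ : ℝ,
        (2 * D / h ^ 2) * (1 + Real.cos (((M : ℝ) - 1) * Real.pi / (M : ℝ))) ≤ ℓ ∧
        ℓ ≤ (2 * D / h ^ 2) * (1 + Real.cos (Real.pi / (M : ℝ))) ∧
        (ε / ℓ) * (1 - 2 * υUB) ≤ w ∧ w ≤ (ε / ℓ) * (1 - 2 * υLB) := by
  classical
  have hn1 : M - 1 + 1 = M := by omega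
  set V : ℕ → ℂ := fun k => if hk : 1 ≤ k ∧ k ≤ M - 1 then v ⟨k-1, by omega⟩ else 0 with hV
  have hV0 : V 0 = 0 := by simp [hV]
  have hVM : V M = 0 := by
    simp only [hV]; rw [dif_neg (by omega)]
  have hVM1 : V (M - 1 + 1) = 0 := by rw [hn1]; exact hVM
  have hVi : ∀ i : Fin (M-1), V ((i:ℕ)+1) = v i := by
    intro i
    have hi := i.isLt
    simp only [hV]
    rw [dif_pos ⟨by omega, by omega⟩]
    congr 1
  -- mulVec formula
  have hmul : ∀ i : Fin (M-1),
      (((-fdMatrix M D h).map Complex.ofReal).mulVec v) i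
        = ((D/h^2 : ℝ) : ℂ) * (2 * V ((i:ℕ)+1) - V ((i:ℕ)+2) - V (i:ℕ)) := by
    intro i
    have hi := i.isLt
    rw [Matrix.mulVec, dotProduct]
    have step1 : ∀ j : Fin (M-1), ((-fdMatrix M D h).map Complex.ofReal) i j * v j
        = ((D/h^2 : ℝ) : ℂ) * (2 * ((if (i:ℕ) = (j:ℕ) then 1 else 0) * V ((j:ℕ)+1))
            - ((if (i:ℕ) + 1 = (j:ℕ) then 1 else 0) * V ((j:ℕ)+1))
            - ((if (j:ℕ) + 1 = (i:ℕ) then 1 else 0) * V ((j:ℕ)+1))) := by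
      intro j
      rw [fd_entry, ← hVi j]
      ring
    rw [Finset.sum_congr rfl fun j _ => step1 j]
    rw [← Finset.mul_sum]
    congr 1
    rw [Finset.sum_sub_distrib, Finset.sum_sub_distrib, ← Finset.mul_sum]
    have e1 := Fin.sum_univ_eq_sum_range
      (fun k => (if (i:ℕ) = k then (1:ℂ) else 0) * V (k+1)) (M-1)
    have e2 := Fin.sum_univ_eq_sum_range
      (fun k => (if (i:ℕ) + 1 = k then (1:ℂ) else 0) * V (k+1)) (M-1)
    have e3 := Fin.sum_univ_eq_sum_range
      (fun k => (if k + 1 = (i:ℕ) then (1:ℂ) else 0) * V (k+1)) (M-1)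
    rw [e1, e2, e3, ind_sum, ind_sum, ind_sum']
    rw [if_pos hi]
    have c2 : (if (i:ℕ)+1 < M-1 then V ((i:ℕ)+1+1) else 0) = V ((i:ℕ)+2) := by
      split_ifs with hc
      · norm_num
      · have : (i:ℕ)+2 = M - 1 + 1 := by omega
        rw [this, hVM1]
    have c3 : (if 1 ≤ (i:ℕ) ∧ (i:ℕ) - 1 < M-1 then V ((i:ℕ)-1+1) else 0) = V (i:ℕ) := by
      split_ifs with hc
      · congr 1; omega
      · have : (i:ℕ) = 0 := by omega
        rw [this, hV0]
    rw [c2, c3]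
  -- quadratic form = (D/h²)·Q
  set Q : ℝ := ∑ k ∈ range M, Complex.normSq (V (k+1) - V k) with hQ
  have hform : star v ⬝ᵥ (((-fdMatrix M D h).map Complex.ofReal).mulVec v)
      = ((D/h^2 : ℝ) : ℂ) * ((Q : ℝ) : ℂ) := by
    rw [dotProduct]
    have step : ∀ i : Fin (M-1), (star v) i * (((-fdMatrix M D h).map Complex.ofReal).mulVec v) i
        = ((D/h^2 : ℝ) : ℂ) * ((starRingEnd ℂ) (V ((i:ℕ)+1)) * (2 * V ((i:ℕ)+1) - V ((i:ℕ)+2) - V (i:ℕ))) := by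
      intro i
      rw [hmul i]
      simp only [Pi.star_apply, RCLike.star_def, ← hVi i]
      ring
    rw [Finset.sum_congr rfl fun i _ => step i, ← Finset.mul_sum]
    congr 1
    rw [Fin.sum_univ_eq_sum_range
      (fun k => (starRingEnd ℂ) (V (k+1)) * (2 * V (k+1) - V (k+2) - V k)) (M-1)]
    have ext : ∑ k ∈ range M, (starRingEnd ℂ) (V (k+1)) * (2 * V (k+1) - V (k+2) - V k)
        = ∑ k ∈ range (M-1), (starRingEnd ℂ) (V (k+1)) * (2 * V (k+1) - V (k+2) - V k) := by
      rw [← hn1, Finset.sum_range_succ, hVM1]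
      simp
    rw [← ext, sbp M V hV0 hVM, hQ]
    push_cast
    rfl
  rw [hform] at hv
  have hQ1 : D/h^2 * Q = 1 := by
    have : (((D/h^2 * Q : ℝ)) : ℂ) = ((1:ℝ) : ℂ) := by
      rw [Complex.ofReal_mul, hv, Complex.ofReal_one]
    exact_mod_cast this
  have hDh : (0:ℝ) < D/h^2 := by positivity
  have hQpos : 0 < Q := by nlinarith
  -- the real number w
  set w : ℝ := ∑ i : Fin (M-1), ε * (1 - 2 * ξ i) * Complex.normSq (v i) with hw
  have hdiag : star v ⬝ᵥ
      (((Matrix.diagonal (fun i => ε * (1 - 2 * ξ i))).map Complex.ofReal).mulVec v) = (w : ℂ) := by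
    rw [Matrix.diagonal_map (by simp), dotProduct]
    have step : ∀ i : Fin (M-1),
        (star v) i * ((Matrix.diagonal (fun i => ((ε * (1 - 2 * ξ i) : ℝ) : ℂ))).mulVec v) i
          = ((ε * (1 - 2 * ξ i) * Complex.normSq (v i) : ℝ) : ℂ) := by
      intro i
      rw [Matrix.mulVec_diagonal]
      simp only [Pi.star_apply, RCLike.star_def]
      rw [mul_comm ((starRingEnd ℂ) (v i)), mul_assoc, Complex.mul_conj]
      push_cast
      ring
    rw [Finset.sum_congr rfl fun i _ => step i, hw]
    push_cast
    rfl
  -- norms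
  set s : ℝ := ∑ k ∈ range (M+1), Complex.normSq (V k) with hs
  have hsv : s = ∑ i : Fin (M-1), Complex.normSq (v i) := by
    rw [hs, Finset.sum_range_succ' (fun k => Complex.normSq (V k)) M, hV0]
    rw [show range M = range (M-1+1) from by rw [hn1], Finset.sum_range_succ, hVM1]
    rw [← Fin.sum_univ_eq_sum_range (fun k => Complex.normSq (V (k+1))) (M-1)]
    rw [Finset.sum_congr rfl (fun (i : Fin (M-1)) _ => congrArg Complex.normSq (hVi i))]
    simp
  have hM1 : 1 ≤ M := by omega
  have hWlow := wirtinger_low M hM1 V hV0 hVM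
  have hWup := wirtinger_up M hM1 V hV0 hVM
  rw [← hs] at hWlow hWup
  rw [← hQ] at hWlow hWup
  have hcos0 : 0 ≤ Real.cos (Real.pi / M) := by
    apply Real.cos_nonneg_of_mem_Icc
    constructor
    · have := Real.pi_pos
      have hM0 : (0:ℝ) < M := by exact_mod_cast (by omega : 0 < M)
      have : 0 < Real.pi / M := by positivity
      linarith
    · rw [div_le_div_iff₀ (by exact_mod_cast (by omega : 0 < M)) (by norm_num : (0:ℝ) < 2)]
      have h2M : (2:ℝ) ≤ M := by exact_mod_cast hM
      nlinarith [Real.pi_pos]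
  have hspos : 0 < s := by
    have hsnn : 0 ≤ s := by
      rw [hsv]; exact Finset.sum_nonneg fun i _ => Complex.normSq_nonneg _
    rcases lt_or_eq_of_le hsnn with hlt | heq
    · exact hlt
    · exfalso; rw [← heq] at hWup; nlinarith
  refine ⟨w, hdiag, 1/s, ?_, ?_, ?_, ?_⟩
  · -- lower bound on ℓ
    have hcos : ((M:ℝ) - 1) * Real.pi / M = Real.pi - Real.pi / M := by
      have hM0 : (M:ℝ) ≠ 0 := by exact_mod_cast (by omega : M ≠ 0)
      field_simp
    rw [hcos, Real.cos_pi_sub]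
    rw [le_div_iff₀ hspos]
    have hmm := mul_le_mul_of_nonneg_left hWlow hDh.le
    have e : 2*D/h^2*(1 + -Real.cos (Real.pi/(M:ℝ)))*s
        = D/h^2 * (2*(1-Real.cos (Real.pi/(M:ℝ)))*s) := by ring
    linarith
  · rw [div_le_iff₀ hspos]
    have hmm := mul_le_mul_of_nonneg_left hWup hDh.le
    have e : D/h^2 * (2*(1+Real.cos (Real.pi/(M:ℝ)))*s)
        = 2*D/h^2*(1+Real.cos (Real.pi/(M:ℝ)))*s := by ring
    linarith
  · have key : ε * (1 - 2*υUB) * s ≤ w := by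
      rw [hw, hsv, Finset.mul_sum]
      apply Finset.sum_le_sum
      intro i _
      have h2 := (hξ i).2
      have he : ε * (1 - 2*υUB) ≤ ε * (1 - 2*ξ i) := by nlinarith
      exact mul_le_mul_of_nonneg_right he (Complex.normSq_nonneg _)
    have hdd : ε / (1/s) = ε * s := by field_simp
    rw [hdd]
    have e2 : ε * s * (1 - 2*υUB) = ε * (1 - 2*υUB) * s := by ring
    linarith
  · have key : w ≤ ε * (1 - 2*υLB) * s := by
      rw [hw, hsv, Finset.mul_sum]
      apply Finset.sum_le_sum
      intro i _
      have h1 := (hξ i).1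
      have he : ε * (1 - 2*ξ i) ≤ ε * (1 - 2*υLB) := by nlinarith
      exact mul_le_mul_of_nonneg_right he (Complex.normSq_nonneg _)
    have hdd : ε / (1/s) = ε * s := by field_simp
    rw [hdd]
    have e2 : ε * s * (1 - 2*υLB) = ε * (1 - 2*υLB) * s := by ring
    linarith
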